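/- arXiv:2301.00919 — 3 statements merged into one kernel-verified Lean document; each statement's English description precedes it below -/
import Mathlib

section
/- There exist an absolute constant C > 0 and a natural number m (the paper obtains m = 5) such that for every measurable G : ℝ³ → [0,∞) with ‖G‖_{L¹(ℝ³)} = 1 and k := max{1, ‖⟨·⟩²G‖_{L²(ℝ³)}} < ∞, and for every v ∈ ℝ³: ∫_{ℝ³} G(v−v')/|v'| dv' ≥ 1/(C k^m ⟨v⟩). -/
open MeasureTheory Real

noncomputable section

abbrev E3 := EuclideanSpace ℝ (Fin 3)

/-- Landau collision kernel entries. -/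
def Phi (z : E3) (i j : Fin 3) : ℝ :=
  (if i = j then (1 : ℝ) else 0) / ‖z‖ - z i * z j / ‖z‖ ^ 3

/-- Japanese bracket of a vector. -/
def jap (v : E3) : ℝ := Real.sqrt (1 + ‖v‖ ^ 2)

/-- Japanese bracket of a real number. -/
def japR (r : ℝ) : ℝ := Real.sqrt (1 + r ^ 2)

/-- Maxwellian with inverse temperature `q`. -/
def maxw (q : ℝ) (ξ : E3) : ℝ :=
  (q / (2 * π)) ^ ((3 : ℝ) / 2) * Real.exp (-q * ‖ξ‖ ^ 2 / 2)

def sqMaxw (q : ℝ) (ξ : E3) : ℝ := Real.sqrt (maxw q ξ)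

/-- Entrywise convolution `(Φ_{ij} ∗ G)(v)`. -/
def convPhi (G : E3 → ℝ) (i j : Fin 3) (v : E3) : ℝ := ∫ w : E3, Phi (v - w) i j * G w

/-- `σ_{ij} = Φ_{ij} ∗ μ` with `μ = μ₁` the standard Maxwellian. -/
def sigmaM (i j : Fin 3) (v : E3) : ℝ := convPhi (maxw 1) i j v

/-- Orthogonal projection onto `span {v}`. -/
def projPar (v u : E3) : E3 := ((inner ℝ u v : ℝ) / ‖v‖ ^ 2) • v

/-- Orthogonal projection onto `{v}ᗮ`. -/
def projPerp (v u : E3) : E3 := u - projPar v u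

/-- Cone of points making angle less than `θ` with the line spanned by `ν`. -/
def Acone (ν : E3) (θ : ℝ) : Set E3 := {w : E3 | ‖projPerp ν w‖ < Real.sin θ * ‖w‖}

def e3 (i : Fin 3) : E3 := EuclideanSpace.single i 1

/-- Partial derivative in direction `i`. -/
def pd (i : Fin 3) (f : E3 → ℝ) (v : E3) : ℝ := fderiv ℝ f v (e3 i)

/-- The Landau collision operator in divergence form. -/
def Qop (G₁ G₂ : E3 → ℝ) (v : E3) : ℝ :=
  ∑ i, pd i (fun w => ∑ j, ∫ w' : E3,
    Phi (w - w') i j * (G₁ w' * pd j G₂ w - G₂ w * pd j G₁ w')) v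

/-- Rescaled electron–ion collision operator `Q^ε_{−+}`. -/
def Qmp (ε : ℝ) (G₁ G₂ : E3 → ℝ) (v : E3) : ℝ :=
  ∑ i, pd i (fun w => ∑ j, ∫ ξ' : E3,
    Phi (ε • w - ξ') i j * (ε * G₁ ξ' * pd j G₂ w - G₂ w * pd j G₁ ξ')) v

/-- Rescaled ion–electron collision operator `Q^ε_{+−}`. -/
def Qpm (ε : ℝ) (G₁ G₂ : E3 → ℝ) (ξ : E3) : ℝ :=
  ∑ i, pd i (fun w => ∑ j, ∫ v' : E3,
    Phi (w - ε • v') i j * (G₁ v' * pd j G₂ w - ε * G₂ w * pd j G₁ v')) ξ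

def lap (f : E3 → ℝ) (x : E3) : ℝ := ∑ i, pd i (pd i f) x

/-- Fundamental domain for the torus `𝕋³ = (ℝ/ℤ)³`. -/
def cube : Set E3 := {x : E3 | ∀ i, x i ∈ Set.Ico (0 : ℝ) 1}

def L2norm (ψ : E3 → ℝ) : ℝ := Real.sqrt (∫ v : E3, ψ v ^ 2)

def L2ip (f g : E3 → ℝ) : ℝ := ∫ v : E3, f v * g v

/-- Square of the `H_σ` norm. -/
def HsigSq (ψ : E3 → ℝ) : ℝ :=
  (∫ v : E3, ∑ i, ∑ j, sigmaM i j v * pd i ψ v * pd j ψ v) +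
    ∫ v : E3, (∑ i, sigmaM i i v) * ψ v ^ 2

def HsigNorm (ψ : E3 → ℝ) : ℝ := Real.sqrt (HsigSq ψ)

/-- Square of the `H⁻_{σ;ε}` seminorm. -/
def HminSq (ε : ℝ) (ψ : E3 → ℝ) : ℝ :=
  ε⁻¹ * ∫ ξ : E3, ∑ i, ∑ j, sigmaM i j (ε⁻¹ • ξ) * pd i ψ ξ * pd j ψ ξ

def HminNorm (ε : ℝ) (ψ : E3 → ℝ) : ℝ := Real.sqrt (HminSq ε ψ)

/-- Orthogonal `L²` projection onto
`span {μ_γ^{1/2}, ξ₁μ_γ^{1/2}, ξ₂μ_γ^{1/2}, ξ₃μ_γ^{1/2}, |ξ|²μ_γ^{1/2}}`, computed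
via the orthonormal basis `μ_γ^{1/2}, √γ ξ_i μ_γ^{1/2}, (γ|ξ|²−3)/√6 μ_γ^{1/2}`. -/
def Pgam (γ : ℝ) (h : E3 → ℝ) (ξ : E3) : ℝ :=
  (∫ ζ : E3, h ζ * sqMaxw γ ζ) * sqMaxw γ ξ +
  (∑ i, (∫ ζ : E3, h ζ * (Real.sqrt γ * ζ i * sqMaxw γ ζ)) * (Real.sqrt γ * ξ i * sqMaxw γ ξ)) +
  (∫ ζ : E3, h ζ * ((γ * ‖ζ‖ ^ 2 - 3) / Real.sqrt 6 * sqMaxw γ ζ)) *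
    ((γ * ‖ξ‖ ^ 2 - 3) / Real.sqrt 6 * sqMaxw γ ξ)

def PgamPerp (γ : ℝ) (h : E3 → ℝ) (ξ : E3) : ℝ := h ξ - Pgam γ h ξ

/-- Linearized Landau operator `ℒ_γ` (nonnegative sign convention). -/
def Lgam (γ : ℝ) (h : E3 → ℝ) (ξ : E3) : ℝ :=
  -(sqMaxw γ ξ)⁻¹ *
    (Qop (fun w => sqMaxw γ w * h w) (maxw γ) ξ + Qop (maxw γ) (fun w => sqMaxw γ w * h w) ξ)

/-- Two-temperature linearized operator `ℒ̃_{γ,q}`. -/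
def Ltil (γ q : ℝ) (h : E3 → ℝ) (ξ : E3) : ℝ :=
  -(sqMaxw q ξ)⁻¹ *
    (Qop (fun w => sqMaxw q w * h w) (maxw γ) ξ + Qop (maxw γ) (fun w => sqMaxw q w * h w) ξ)

/-- Nonlinear collision form `Γ_q`. -/
def Gamq (q : ℝ) (h₁ h₂ : E3 → ℝ) (ξ : E3) : ℝ :=
  -(sqMaxw q ξ)⁻¹ * Qop (fun w => sqMaxw q w * h₁ w) (fun w => sqMaxw q w * h₂ w) ξ

/-- Linearized ion–electron operator `ℳ_{q,G}` (nonnegative sign convention). -/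
def Mqg (ε q : ℝ) (G h : E3 → ℝ) (ξ : E3) : ℝ :=
  -(sqMaxw q ξ)⁻¹ * Qpm ε G (fun w => sqMaxw q w * h w) ξ


section AuxStmt4
open Metric

def Ffun : ℝ → ℝ := (Set.Ioc (0:ℝ) 1).indicator (fun t => t ^ (-(2/3) : ℝ))

def qfun : ℝ → ℝ := fun x => Ffun |x|

lemma Ffun_int : Integrable Ffun := by
  rw [Ffun, integrable_indicator_iff measurableSet_Ioc]
  have h := intervalIntegral.intervalIntegrable_rpow' (a := (0:ℝ)) (b := 1)
    (by norm_num : (-1:ℝ) < -(2/3))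
  rwa [intervalIntegrable_iff_integrableOn_Ioc_of_le zero_le_one] at h

lemma qfun_int : Integrable qfun := by
  have h1 : Integrable ((Set.Ioi (0:ℝ)).indicator Ffun) := Ffun_int.indicator measurableSet_Ioi
  have h2 : Integrable ((Set.Iic (0:ℝ)).indicator (fun x => Ffun (-x))) :=
    (Ffun_int.comp_neg).indicator measurableSet_Iic
  have heq : qfun = fun x => (Set.Ioi (0:ℝ)).indicator Ffun x
      + (Set.Iic (0:ℝ)).indicator (fun y => Ffun (-y)) x := by
    funext x
    rcases le_or_gt x 0 with h | h
    · simp [qfun, Set.indicator_of_notMem (by simpa using not_lt.2 h : x ∉ Set.Ioi (0:ℝ)),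
        Set.indicator_of_mem (by simpa using h : x ∈ Set.Iic (0:ℝ)), abs_of_nonpos h]
    · simp [qfun, Set.indicator_of_mem (by simpa using h : x ∈ Set.Ioi (0:ℝ)),
        Set.indicator_of_notMem (by simpa using h : x ∉ Set.Iic (0:ℝ)), abs_of_pos h]
  rw [heq]; exact h1.add h2

lemma prodq_int : Integrable (fun w : E3 => ∏ i, qfun (w i)) := by
  have h : Integrable (fun x : Fin 3 → ℝ => ∏ i, qfun (x i)) :=
    Integrable.fintype_prod (fun _ => qfun_int)
  have e := EuclideanSpace.volume_preserving_symm_measurableEquiv_toLp (ι := Fin 3)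
  have h2 := (e.integrable_comp_emb
    (MeasurableEquiv.toLp 2 (Fin 3 → ℝ)).symm.measurableEmbedding).2 h
  exact h2

lemma hyper_null (i : Fin 3) : volume {w : E3 | w i = 0} = 0 := by
  have hset : {w : E3 | w i = 0}
      = ((LinearMap.ker (EuclideanSpace.projₗ i : E3 →ₗ[ℝ] ℝ)) : Set E3) := by
    rfl
  rw [hset]
  refine Measure.addHaar_submodule _ _ ?_
  intro h
  rw [LinearMap.ker_eq_top] at h
  have := congrFun (congrArg (fun f => f.toFun) h) (EuclideanSpace.single i 1)
  simp [EuclideanSpace.single_apply] at this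

lemma coord_le_norm (w : E3) (i : Fin 3) : |w i| ≤ ‖w‖ := by
  have h : ‖w i‖ ^ 2 ≤ ∑ j, ‖w j‖ ^ 2 :=
    Finset.single_le_sum (f := fun j => ‖w j‖ ^ 2) (fun j _ => sq_nonneg _) (Finset.mem_univ i)
  calc |w i| = Real.sqrt (‖w i‖ ^ 2) := by
        rw [Real.sqrt_sq_eq_abs, Real.norm_eq_abs, abs_abs]
    _ ≤ Real.sqrt (∑ j, ‖w j‖ ^ 2) := Real.sqrt_le_sqrt h
    _ = ‖w‖ := (EuclideanSpace.norm_eq w).symm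

lemma ae_coords_ne : ∀ᵐ w : E3, ∀ i, w i ≠ 0 := by
  rw [MeasureTheory.ae_all_iff]
  intro i
  rw [MeasureTheory.ae_iff]
  convert hyper_null i using 2
  ext w
  simp

lemma singular_int : IntegrableOn (fun w : E3 => (‖w‖ ^ 2)⁻¹) (Metric.ball 0 1) := by
  refine Integrable.mono' (prodq_int.integrableOn) ?_ ?_
  · exact ((measurable_norm.pow_const 2).inv).aestronglyMeasurable
  · rw [ae_restrict_iff' measurableSet_ball]
    filter_upwards [ae_coords_ne] with w hw hball
    have hwne : w ≠ 0 := fun h => hw 0 (by rw [h]; rfl)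
    have hn : (0:ℝ) < ‖w‖ := norm_pos_iff.2 hwne
    have hn1 : ‖w‖ < 1 := mem_ball_zero_iff.1 hball
    have hq : ∀ i, qfun (w i) = |w i| ^ (-(2/3) : ℝ) := by
      intro i
      have hmem : |w i| ∈ Set.Ioc (0:ℝ) 1 :=
        ⟨abs_pos.2 (hw i), (coord_le_norm w i).trans hn1.le⟩
      simp [qfun, Ffun, Set.indicator_of_mem hmem]
    have hP : (0:ℝ) < ∏ i, |w i| := Finset.prod_pos (fun i _ => abs_pos.2 (hw i))
    have hPle : (∏ i, |w i|) ≤ ‖w‖ ^ 3 := by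
      calc (∏ i, |w i|) ≤ ∏ _i : Fin 3, ‖w‖ :=
            Finset.prod_le_prod (fun i _ => abs_nonneg _) (fun i _ => coord_le_norm w i)
        _ = ‖w‖ ^ 3 := by simp [Finset.prod_const]
    have key : (‖w‖ ^ 3 : ℝ) ^ (-(2/3) : ℝ) ≤ (∏ i, |w i|) ^ (-(2/3) : ℝ) :=
      Real.rpow_le_rpow_of_nonpos hP hPle (by norm_num)
    have hprod : ∏ i, qfun (w i) = (∏ i, |w i|) ^ (-(2/3) : ℝ) := by
      rw [← Real.finset_prod_rpow _ _ (fun i _ => abs_nonneg (w i))]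
      exact Finset.prod_congr rfl (fun i _ => hq i)
    have hpow : (‖w‖ ^ 3 : ℝ) ^ (-(2/3) : ℝ) = (‖w‖ ^ 2)⁻¹ := by
      rw [← Real.rpow_natCast ‖w‖ 3, ← Real.rpow_mul hn.le, ← Real.rpow_natCast ‖w‖ 2,
        ← Real.rpow_neg hn.le]
      norm_num
    rw [Real.norm_eq_abs, abs_of_nonneg (by positivity), hprod, ← hpow]
    exact key

lemma conv_integrable (G : E3 → ℝ) (hGm : Measurable G) (hGpos : ∀ v, 0 ≤ G v)
    (hGint : Integrable G) (hG2 : Integrable (fun w => G w ^ 2)) (v : E3) :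
    Integrable (fun w : E3 => G (v - w) / ‖w‖) := by
  have hmeas : Measurable (fun w : E3 => G (v - w) / ‖w‖) :=
    (hGm.comp (measurable_const.sub measurable_id)).div measurable_norm
  rw [← integrableOn_univ, ← Set.union_compl_self (Metric.ball (0:E3) 1)]
  apply IntegrableOn.union
  · have hGv2 : Integrable (fun w : E3 => G (v - w) ^ 2) := hG2.comp_sub_left v
    have hmaj : IntegrableOn (fun w : E3 => (G (v - w) ^ 2 + (‖w‖ ^ 2)⁻¹) / 2)
        (Metric.ball 0 1) := (hGv2.integrableOn.add singular_int).div_const 2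
    refine Integrable.mono' hmaj hmeas.aestronglyMeasurable.restrict ?_
    refine ae_of_all _ fun w => ?_
    rw [Real.norm_eq_abs, abs_of_nonneg (div_nonneg (hGpos _) (norm_nonneg _)), div_eq_mul_inv]
    have h1 : (‖w‖⁻¹) ^ 2 = (‖w‖ ^ 2)⁻¹ := inv_pow _ _
    nlinarith [sq_nonneg (G (v - w) - ‖w‖⁻¹), sq_nonneg (G (v-w)), sq_nonneg ‖w‖⁻¹]
  · refine Integrable.mono' (hGint.comp_sub_left v).integrableOn
      hmeas.aestronglyMeasurable.restrict ?_
    rw [ae_restrict_iff' measurableSet_ball.compl]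
    refine ae_of_all _ fun w hw => ?_
    have h1 : 1 ≤ ‖w‖ := by
      simpa [Metric.mem_ball, not_lt] using hw
    rw [Real.norm_eq_abs, abs_of_nonneg (div_nonneg (hGpos _) (norm_nonneg _))]
    exact div_le_self (hGpos _) h1

end AuxStmt4

set_option maxHeartbeats 1000000 in
/-- Non-perturbative lower bound `∫ G(v−v')/|v'| dv' ≥ 1/(C k^m ⟨v⟩)` for a
probability density `G`, with `k = max{1, ‖⟨·⟩²G‖_{L²}}`. -/
theorem stmt_4 :
    ∃ C > (0:ℝ), ∃ m : ℕ, ∀ G : E3 → ℝ, Measurable G → (∀ v, 0 ≤ G v) →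
      Integrable G → (∫ v : E3, G v) = 1 →
      Integrable (fun v : E3 => (jap v ^ 2 * G v) ^ 2) →
      ∀ v : E3,
        1 / (C * max 1 (Real.sqrt (∫ w : E3, (jap w ^ 2 * G w) ^ 2)) ^ m * jap v) ≤
          ∫ w : E3, G (v - w) / ‖w‖ := by
  classical
  set χ : E3 → ℝ := fun x => ((1:ℝ) + ‖x‖ ^ 2) ^ (-(7/2 : ℝ) / 2) with hχdef
  have hχint : Integrable χ := by
    have h3 : ((Module.finrank ℝ E3 : ℝ)) < 7/2 := by
      rw [finrank_euclideanSpace_fin]; norm_num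
    exact integrable_rpow_neg_one_add_norm_sq h3
  have hχnonneg : ∀ x, 0 ≤ χ x := fun x => Real.rpow_nonneg (by positivity) _
  set B : ℝ := ∫ x : E3, χ x with hBdef
  have hB0 : 0 ≤ B := integral_nonneg hχnonneg
  set b : ℝ := (4 * (B + 1)) ^ 2 with hbdef
  have hb0 : 0 ≤ b := sq_nonneg _
  refine ⟨2 * (1 + b), by positivity, 4, ?_⟩
  intro G hGmeas hGpos hGint hGmass hψ2 v
  set ψ : E3 → ℝ := fun w => jap w ^ 2 * G w with hψdef
  have hψ2' : Integrable (fun w => ψ w ^ 2) := hψ2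
  have hjap : ∀ w : E3, jap w ^ 2 = 1 + ‖w‖ ^ 2 := fun w =>
    Real.sq_sqrt (by positivity)
  have hjap1 : ∀ w : E3, (1:ℝ) ≤ jap w ^ 2 := fun w => by
    rw [hjap]; nlinarith [sq_nonneg ‖w‖]
  have hjmeas : Measurable jap :=
    (measurable_const.add (measurable_norm.pow_const 2)).sqrt
  have hψmeas : Measurable ψ := (hjmeas.pow_const 2).mul hGmeas
  have hψnonneg : ∀ w, 0 ≤ ψ w := fun w => mul_nonneg (sq_nonneg _) (hGpos w)
  set K : ℝ := Real.sqrt (∫ w : E3, (jap w ^ 2 * G w) ^ 2) with hKdef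
  have hKψ : K = Real.sqrt (∫ w : E3, ψ w ^ 2) := rfl
  set k : ℝ := max 1 K with hkdef
  have hk1 : (1:ℝ) ≤ k := le_max_left _ _
  have hk0 : (0:ℝ) < k := lt_of_lt_of_le one_pos hk1
  have hKk : K ≤ k := le_max_right _ _
  have hK0 : 0 ≤ K := Real.sqrt_nonneg _
  set y : ℝ := 4 * (B + 1) * k ^ 2 with hydef
  have hy0 : (0:ℝ) < y := by positivity
  set R : ℝ := b * k ^ 4 with hRdef
  have hRy : R = y ^ 2 := by rw [hRdef, hydef, hbdef]; ring
  have hR0 : (0:ℝ) < R := by rw [hRy]; positivity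
  set s : Set E3 := Metric.closedBall (0:E3) R with hsdef
  have hsmeas : MeasurableSet s := measurableSet_closedBall
  set φ : E3 → ℝ := sᶜ.indicator (fun w => ((1:ℝ) + ‖w‖ ^ 2)⁻¹) with hφdef
  have hφmeas : Measurable φ :=
    Measurable.indicator ((measurable_const.add (measurable_norm.pow_const 2)).inv) hsmeas.compl
  have hφnonneg : ∀ w, 0 ≤ φ w := fun w => Set.indicator_nonneg (fun x _ => by positivity) w
  have hc4 : (0:ℝ) < 1 + R ^ 2 := by positivity
  -- pointwise bound for φ ^ 2
  have hφptwise : ∀ w, φ w ^ 2 ≤ (1 + R ^ 2) ^ (-(1/4) : ℝ) * χ w := by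
    intro w
    by_cases hw : w ∈ sᶜ
    · have hwR : R ≤ ‖w‖ := by
        have h' : ¬ ‖w‖ ≤ R := by
          simpa [hsdef, Metric.mem_closedBall, dist_zero_right] using hw
        linarith [not_le.1 h']
      have hpos : (0:ℝ) < 1 + ‖w‖ ^ 2 := by positivity
      have h1R : 1 + R ^ 2 ≤ 1 + ‖w‖ ^ 2 := by nlinarith [pow_le_pow_left₀ hR0.le hwR 2]
      have heq : φ w ^ 2
          = (1 + ‖w‖ ^ 2) ^ (-(1/4) : ℝ) * (1 + ‖w‖ ^ 2) ^ (-(7/2 : ℝ) / 2) := by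
        rw [hφdef]
        simp only [Set.indicator_of_mem hw]
        rw [inv_pow, ← Real.rpow_natCast (1 + ‖w‖ ^ 2) 2, ← Real.rpow_neg hpos.le,
          ← Real.rpow_add hpos]
        norm_num
      rw [heq, hχdef]
      exact mul_le_mul_of_nonneg_right
        (Real.rpow_le_rpow_of_nonpos hc4 h1R (by norm_num))
        (Real.rpow_nonneg hpos.le _)
    · rw [hφdef]
      simp only [Set.indicator_of_notMem hw]
      have : (0:ℝ) ≤ (1 + R ^ 2) ^ (-(1/4) : ℝ) * χ w :=
        mul_nonneg (Real.rpow_nonneg hc4.le _) (hχnonneg w)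
      simpa using this
  have hφ2int : Integrable (fun w => φ w ^ 2) := by
    refine Integrable.mono' (hχint.const_mul ((1 + R ^ 2) ^ (-(1/4) : ℝ)))
      ((hφmeas.pow_const 2).aestronglyMeasurable) (ae_of_all _ fun w => ?_)
    rw [Real.norm_eq_abs, abs_of_nonneg (sq_nonneg _)]
    exact hφptwise w
  have hφ2bound : (∫ w, φ w ^ 2) ≤ (1 + R ^ 2) ^ (-(1/4) : ℝ) * B := by
    calc (∫ w, φ w ^ 2) ≤ ∫ w, (1 + R ^ 2) ^ (-(1/4) : ℝ) * χ w :=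
          integral_mono hφ2int (hχint.const_mul _) hφptwise
      _ = (1 + R ^ 2) ^ (-(1/4) : ℝ) * B := by rw [integral_const_mul]
  have hyR : y ^ (4:ℕ) ≤ 1 + R ^ 2 := by rw [hRy]; nlinarith [sq_nonneg y]
  have hstep : (1 + R ^ 2) ^ (-(1/4) : ℝ) ≤ y⁻¹ := by
    have h1 : (1 + R ^ 2) ^ (-(1/4) : ℝ) ≤ ((y:ℝ) ^ (4:ℕ)) ^ (-(1/4) : ℝ) :=
      Real.rpow_le_rpow_of_nonpos (by positivity) hyR (by norm_num)
    have h2 : ((y:ℝ) ^ (4:ℕ)) ^ (-(1/4) : ℝ) = y⁻¹ := by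
      rw [← Real.rpow_natCast y 4, ← Real.rpow_mul hy0.le]
      norm_num [Real.rpow_neg_one]
    rw [h2] at h1
    exact h1
  have hφ2small : (∫ w, φ w ^ 2) ≤ (1 / (2 * k)) ^ 2 := by
    have hy1 : y⁻¹ * B ≤ 1 / (4 * k ^ 2) := by
      rw [hydef, inv_mul_eq_div, div_le_div_iff₀ (by positivity) (by positivity)]
      nlinarith [sq_nonneg k, hk0]
    have h2 : (1 / (2 * k)) ^ 2 = 1 / (4 * k ^ 2) := by
      field_simp; ring
    calc (∫ w, φ w ^ 2) ≤ (1 + R ^ 2) ^ (-(1/4) : ℝ) * B := hφ2bound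
      _ ≤ y⁻¹ * B := mul_le_mul_of_nonneg_right hstep hB0
      _ ≤ 1 / (4 * k ^ 2) := hy1
      _ = (1 / (2 * k)) ^ 2 := h2.symm
  -- Cauchy-Schwarz
  have hφmem : MemLp φ 2 volume :=
    (memLp_two_iff_integrable_sq hφmeas.aestronglyMeasurable).2 hφ2int
  have hψmem : MemLp ψ 2 volume :=
    (memLp_two_iff_integrable_sq hψmeas.aestronglyMeasurable).2 hψ2'
  have h2e : (ENNReal.ofReal (2:ℝ)) = 2 := by norm_num
  have hCS : (∫ w, φ w * ψ w)
      ≤ (∫ w, φ w ^ (2:ℝ)) ^ ((1:ℝ)/2) * (∫ w, ψ w ^ (2:ℝ)) ^ ((1:ℝ)/2) :=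
    integral_mul_le_Lp_mul_Lq_of_nonneg ⟨by norm_num, by norm_num, by norm_num⟩
      (ae_of_all _ hφnonneg) (ae_of_all _ hψnonneg) (by rw [h2e]; exact hφmem)
      (by rw [h2e]; exact hψmem)
  have hrpow2 : ∀ (x : ℝ), x ^ (2:ℝ) = x ^ 2 := fun x => by
    rw [show (2:ℝ) = ((2:ℕ):ℝ) by norm_num, Real.rpow_natCast]
  have hCS' : (∫ w, φ w * ψ w) ≤ (1 / (2 * k)) * k := by
    have e1 : (∫ w, φ w ^ (2:ℝ)) ^ ((1:ℝ)/2) ≤ 1 / (2 * k) := by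
      simp only [hrpow2]
      rw [← Real.sqrt_eq_rpow]
      calc Real.sqrt (∫ w, φ w ^ 2) ≤ Real.sqrt ((1 / (2 * k)) ^ 2) :=
            Real.sqrt_le_sqrt hφ2small
        _ = 1 / (2 * k) := Real.sqrt_sq (by positivity)
    have e2 : (∫ w, ψ w ^ (2:ℝ)) ^ ((1:ℝ)/2) = K := by
      simp only [hrpow2]
      rw [← Real.sqrt_eq_rpow, hKψ]
    calc (∫ w, φ w * ψ w) ≤ _ := hCS
      _ ≤ (1 / (2 * k)) * k := by
          rw [e2]
          exact mul_le_mul e1 hKk hK0 (by positivity)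
  have htail : (∫ w in sᶜ, G w) ≤ 1/2 := by
    have hid : sᶜ.indicator G = fun w => φ w * ψ w := by
      funext w
      by_cases hw : w ∈ sᶜ
      · rw [hφdef, hψdef]
        simp only [Set.indicator_of_mem hw]
        rw [hjap w, ← mul_assoc, inv_mul_cancel₀ (by positivity), one_mul]
      · rw [hφdef]
        simp [Set.indicator_of_notMem hw]
    rw [← integral_indicator hsmeas.compl, hid]
    calc (∫ w, φ w * ψ w) ≤ (1 / (2 * k)) * k := hCS'
      _ = 1/2 := by field_simp
  have hmass : 1/2 ≤ ∫ w in s, G w := by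
    have hsplit : (∫ w in s, G w) + ∫ w in sᶜ, G w = 1 := by
      rw [integral_add_compl hsmeas hGint, hGmass]
    linarith
  -- integrability of the convolution
  have hG2 : Integrable (fun w => G w ^ 2) := by
    refine Integrable.mono' hψ2' ((hGmeas.pow_const 2).aestronglyMeasurable)
      (ae_of_all _ fun w => ?_)
    rw [Real.norm_eq_abs, abs_of_nonneg (sq_nonneg _)]
    have hle : G w ≤ ψ w := le_mul_of_one_le_left (hGpos w) (hjap1 w)
    exact pow_le_pow_left₀ (hGpos w) hle 2
  have hfint : Integrable (fun w : E3 => G (v - w) / ‖w‖) :=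
    conv_integrable G hGmeas hGpos hGint hG2 v
  set g : E3 → ℝ := fun w => s.indicator G (v - w) / (‖v‖ + R) with hgdef
  have hvR0 : (0:ℝ) < ‖v‖ + R := by positivity
  have hgint : Integrable g := ((hGint.indicator hsmeas).comp_sub_left v).div_const _
  have hgle : g ≤ᵐ[volume] fun w => G (v - w) / ‖w‖ := by
    have hne : ∀ᵐ w : E3, w ≠ 0 := by
      rw [MeasureTheory.ae_iff]
      refine measure_mono_null ?_ (hyper_null 0)
      intro w hw
      simp only [Set.mem_setOf_eq, not_not] at hw
      simp [hw]
    filter_upwards [hne] with w hw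
    by_cases hmem : v - w ∈ s
    · rw [hgdef]
      simp only
      have hvw : ‖v - w‖ ≤ R := by
        simpa [hsdef, Metric.mem_closedBall, dist_zero_right] using hmem
      have hwle : ‖w‖ ≤ ‖v‖ + R := by
        have h' : ‖w‖ = ‖v - (v - w)‖ := by rw [sub_sub_cancel]
        rw [h']
        exact (norm_sub_le _ _).trans (by linarith)
      have hw0 : (0:ℝ) < ‖w‖ := norm_pos_iff.2 hw
      have := Set.indicator_of_mem hmem G
      rw [this]
      gcongr
      exact hGpos _
    · rw [hgdef]
      simp only
      rw [Set.indicator_of_notMem hmem, zero_div]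
      exact div_nonneg (hGpos _) (norm_nonneg _)
  have hgval : (∫ w, g w) = (∫ w in s, G w) / (‖v‖ + R) := by
    rw [hgdef]
    rw [integral_div]
    congr 1
    rw [integral_sub_left_eq_self (s.indicator G) volume v, integral_indicator hsmeas]
  have hlow : (1/2) / (‖v‖ + R) ≤ ∫ w : E3, G (v - w) / ‖w‖ := by
    calc (1/2) / (‖v‖ + R) ≤ (∫ w in s, G w) / (‖v‖ + R) := by gcongr
      _ = ∫ w, g w := hgval.symm
      _ ≤ _ := integral_mono_ae hgint hfint hgle
  have hjv1 : (1:ℝ) ≤ jap v := by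
    have h' := Real.sqrt_le_sqrt (show (1:ℝ) ≤ 1 + ‖v‖ ^ 2 by nlinarith [sq_nonneg ‖v‖])
    simpa [jap] using h'
  have hvjv : ‖v‖ ≤ jap v := by
    have h' : ‖v‖ = Real.sqrt (‖v‖ ^ 2) := (Real.sqrt_sq (norm_nonneg v)).symm
    rw [h', jap]
    exact Real.sqrt_le_sqrt (by nlinarith)
  have hk4 : (1:ℝ) ≤ k ^ 4 := by
    calc (1:ℝ) = 1 ^ 4 := by norm_num
      _ ≤ k ^ 4 := pow_le_pow_left₀ zero_le_one hk1 4
  have hjv0 : (0:ℝ) ≤ jap v := by linarith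
  have hfinal : 2 * (‖v‖ + R) ≤ 2 * (1 + b) * k ^ 4 * jap v := by
    rw [hRdef]
    have h1 : jap v ≤ k ^ 4 * jap v := le_mul_of_one_le_left hjv0 hk4
    have h2 : b * k ^ 4 ≤ b * k ^ 4 * jap v := le_mul_of_one_le_right (by positivity) hjv1
    nlinarith [hvjv, h1, h2]
  calc 1 / (2 * (1 + b) * k ^ 4 * jap v) ≤ 1 / (2 * (‖v‖ + R)) :=
        one_div_le_one_div_of_le (by positivity) hfinal
    _ = (1/2) / (‖v‖ + R) := (div_div 1 2 _).symm
    _ ≤ _ := hlow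

end
end

section
/- There is an absolute constant C > 0 such that for every ε ∈ (0,1] and every ξ ∈ ℝ³: ε^{−1} Σ_{i,j} σ_{ij}(ξ/ε) ξ_i ξ_j ≤ C ε ⟨ξ/ε⟩^{−1}; in particular this quantity is bounded by C·min{ε, ε²/|ξ|} for ξ ≠ 0. -/
open MeasureTheory Real

noncomputable section

section helpers
open Set Metric

lemma phi_quad_form (z v : E3) : ∑ i, ∑ j, Phi z i j * v i * v j
    = (inner ℝ v v : ℝ)/‖z‖ - (inner ℝ z v : ℝ)^2/‖z‖^3 := by
  have hv : (inner ℝ v v : ℝ) = ∑ i, v i * v i := by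
    simp only [PiLp.inner_apply, RCLike.inner_apply, conj_trivial]
  have hz : (inner ℝ z v : ℝ) = ∑ i, z i * v i := by
    simp only [PiLp.inner_apply, RCLike.inner_apply, conj_trivial, mul_comm]
  rw [hv, hz, sq, Finset.sum_mul_sum]
  simp only [Phi, sub_mul, Finset.sum_sub_distrib]
  congr 1
  · rw [Finset.sum_div]
    refine Finset.sum_congr rfl fun i _ => ?_
    rw [Finset.sum_eq_single i]
    · rw [if_pos rfl]; ring
    · intro j _ hj; simp [Ne.symm hj]
    · simp
  · rw [Finset.sum_div]
    refine Finset.sum_congr rfl fun i _ => ?_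
    rw [Finset.sum_div]
    refine Finset.sum_congr rfl fun j _ => ?_
    ring

lemma quad_nonneg (v w : E3) : 0 ≤ ∑ i, ∑ j, Phi (v-w) i j * v i * v j := by
  rw [phi_quad_form]
  rcases eq_or_ne (v - w) 0 with h | h
  · simp [h]
  · have hz : (0:ℝ) < ‖v - w‖ := norm_pos_iff.mpr h
    rw [div_sub_div _ _ (by positivity) (by positivity), le_div_iff₀ (by positivity)]
    have h1 := real_inner_mul_inner_self_le (v - w) v
    have hzz : (inner ℝ (v-w) (v-w) : ℝ) = ‖v-w‖^2 := real_inner_self_eq_norm_sq _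
    rw [hzz] at h1
    nlinarith [mul_le_mul_of_nonneg_left h1 (le_of_lt hz)]

lemma quad_le (v w : E3) : ∑ i, ∑ j, Phi (v-w) i j * v i * v j ≤ ‖w‖^2/‖v-w‖ := by
  rw [phi_quad_form]
  rcases eq_or_ne (v - w) 0 with h | h
  · simp [h]
  · have hz : (0:ℝ) < ‖v - w‖ := norm_pos_iff.mpr h
    set z := v - w with hzdef
    have hv : v = z + w := by simp [hzdef]
    have hzz : (inner ℝ z z : ℝ) = ‖z‖^2 := real_inner_self_eq_norm_sq _
    have hww : (inner ℝ w w : ℝ) = ‖w‖^2 := real_inner_self_eq_norm_sq _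
    have e1 : (inner ℝ z v : ℝ) = ‖z‖^2 + inner ℝ z w := by
      rw [hv, inner_add_right, hzz]
    have e2 : (inner ℝ v v : ℝ) = ‖z‖^2 + 2*inner ℝ z w + ‖w‖^2 := by
      rw [hv, inner_add_add_self, hzz, hww, real_inner_comm w z]; ring
    have cs : (inner ℝ z w : ℝ)^2 ≤ 0 + ‖z‖^2 * ‖w‖^2 := by
      have := real_inner_mul_inner_self_le z w
      nlinarith [this, hzz, hww]
    rw [e1, e2, div_sub_div _ _ (by positivity) (by positivity),
      div_le_div_iff₀ (by positivity) hz]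
    nlinarith [sq_nonneg ‖z‖, hz, cs]


lemma norm_sq_eq (x : E3) : ‖x‖^2 = ∑ i, (x i)^2 := by
  rw [EuclideanSpace.norm_eq, sq_sqrt (by positivity)]
  simp [sq_abs]

lemma gauss_prod_eq {a : ℝ} (x : E3) :
    rexp (-a*‖x‖^2) = ∏ i, rexp (-a * (x i)^2) := by
  rw [← Real.exp_sum]
  congr 1
  rw [norm_sq_eq, neg_mul, Finset.mul_sum, ← Finset.sum_neg_distrib]
  exact Finset.sum_congr rfl fun i _ => by ring

lemma integrable_gauss {a : ℝ} (ha : 0 < a) :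
    Integrable (fun w : E3 => rexp (-a*‖w‖^2)) := by
  have hmp := EuclideanSpace.volume_preserving_symm_measurableEquiv_toLp (Fin 3)
  have hg : Integrable (fun y : Fin 3 → ℝ => ∏ i, rexp (-a * (y i)^2)) :=
    Integrable.fintype_prod (f := fun _ x => rexp (-a * x^2))
      (fun i => integrable_exp_neg_mul_sq ha)
  have := (hmp.integrable_comp_emb
    (MeasurableEquiv.toLp 2 (Fin 3 → ℝ)).symm.measurableEmbedding).mpr hg
  exact this.congr (Filter.Eventually.of_forall fun x => (gauss_prod_eq x).symm)

lemma integral_gauss_eq {a : ℝ} (ha : 0 < a) :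
    ∫ w : E3, rexp (-a*‖w‖^2) = Real.sqrt (π/a) ^ 3 := by
  have hmp := EuclideanSpace.volume_preserving_symm_measurableEquiv_toLp (Fin 3)
  have h1 : ∫ w : E3, rexp (-a*‖w‖^2) = ∫ w : E3, ∏ i, rexp (-a * (w i)^2) := by
    exact integral_congr_ae (Filter.Eventually.of_forall fun x => gauss_prod_eq x)
  have h2 := hmp.integral_comp (MeasurableEquiv.toLp 2 (Fin 3 → ℝ)).symm.measurableEmbedding
    (fun y : Fin 3 → ℝ => ∏ i, rexp (-a * (y i)^2))
  have h3 := integral_fintype_prod_eq_pow (ι := Fin 3) (μ := volume) (fun x : ℝ => rexp (-a * x^2))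
  rw [← volume_pi] at h3
  rw [h1]
  exact h2.trans (by rw [h3, integral_gaussian]; norm_num)

lemma integral_gauss_quarter_le : ∫ w : E3, rexp (-(1/4)*‖w‖^2) ≤ 64 := by
  rw [integral_gauss_eq (by norm_num : (0:ℝ) < 1/4)]
  have hπ : π ≤ 4 := by linarith [Real.pi_le_four]
  have : Real.sqrt (π / (1/4)) ≤ 4 := by
    have h16 : π / (1/4) ≤ 16 := by linarith
    calc Real.sqrt (π/(1/4)) ≤ Real.sqrt 16 := Real.sqrt_le_sqrt h16
      _ = 4 := by rw [show (16:ℝ) = 4^2 by norm_num, Real.sqrt_sq (by norm_num)]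
  calc Real.sqrt (π/(1/4))^3 ≤ 4^3 := by
        exact pow_le_pow_left₀ (Real.sqrt_nonneg _) this 3
    _ = 64 := by norm_num


def J (u : E3) : ℝ := (Metric.ball (0:E3) 1).indicator (fun u => ‖u‖⁻¹) u

lemma J_nonneg (u : E3) : 0 ≤ J u :=
  Set.indicator_nonneg (fun x _ => by positivity) u

lemma J_meas : Measurable J :=
  (measurable_norm.inv).indicator measurableSet_ball

lemma vol_ball_le : volume (Metric.ball (0:E3) 1) ≤ ENNReal.ofReal 5 := by
  rw [EuclideanSpace.volume_ball]
  have hcard : Fintype.card (Fin 3) = 3 := by simp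
  rw [hcard]
  have hG : Real.Gamma ((3:ℝ)/2 + 1) = 3/4 * Real.sqrt π := by
    rw [Real.Gamma_add_one (by norm_num)]
    have : (3:ℝ)/2 = 1/2 + 1 := by norm_num
    rw [this, Real.Gamma_add_one (by norm_num), Real.Gamma_one_half_eq]
    ring
  have hs : (0:ℝ) < Real.sqrt π := Real.sqrt_pos.mpr Real.pi_pos
  have hval : Real.sqrt π ^ 3 / Real.Gamma ((3:ℝ)/2 + 1) = 4/3 * π := by
    rw [hG]
    rw [show Real.sqrt π ^ 3 = Real.sqrt π ^ 2 * Real.sqrt π by ring,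
      Real.sq_sqrt Real.pi_pos.le]
    field_simp
  rw [show ((3:ℕ):ℝ) = (3:ℝ) by norm_num, hval]
  simp only [ENNReal.ofReal_one, one_pow, one_mul]
  exact ENNReal.ofReal_le_ofReal (by nlinarith [Real.pi_lt_d2])

lemma lint_J_le : ∫⁻ u, ENNReal.ofReal (J u) ≤ ENNReal.ofReal 8 := by
  rw [lintegral_eq_lintegral_meas_lt volume
    (Filter.Eventually.of_forall J_nonneg) J_meas.aemeasurable]
  set B := volume (Metric.ball (0:E3) 1) with hB
  have key : ∀ t ∈ Ioi (0:ℝ), volume {a : E3 | t < J a} ≤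
      ENNReal.ofReal ((min 1 t⁻¹)^3) * B := by
    intro t ht
    have hsub : {a : E3 | t < J a} ⊆ Metric.ball (0:E3) (min 1 t⁻¹) := by
      intro a ha
      simp only [mem_setOf_eq, J] at ha
      by_cases hmem : a ∈ Metric.ball (0:E3) 1
      · rw [Set.indicator_of_mem hmem] at ha
        have ha0 : (0:ℝ) < ‖a‖ := by
          by_contra h
          push_neg at h
          have : ‖a‖ = 0 := le_antisymm h (norm_nonneg a)
          rw [this] at ha; simp at ha; exact absurd ha (not_lt.mpr (le_of_lt ht))
        have h1 : ‖a‖ < 1 := by simpa [Metric.mem_ball] using hmem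
        have h2 : ‖a‖ < t⁻¹ := by
          rw [← inv_inv ‖a‖]
          exact inv_strictAnti₀ ht ha  -- t < ‖a‖⁻¹
        simp [Metric.mem_ball, lt_min_iff, h1, h2]
      · rw [Set.indicator_of_notMem hmem] at ha
        exact absurd ha (not_lt.mpr (le_of_lt ht))
    calc volume {a : E3 | t < J a} ≤ volume (Metric.ball (0:E3) (min 1 t⁻¹)) :=
          measure_mono hsub
      _ = ENNReal.ofReal ((min 1 t⁻¹)^(Module.finrank ℝ E3)) * B := by
          rw [Measure.addHaar_ball volume 0 (le_min zero_le_one (inv_nonneg.mpr (le_of_lt ht)))]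
      _ = ENNReal.ofReal ((min 1 t⁻¹)^3) * B := by norm_num [finrank_euclideanSpace]
  have h06 : ∀ t : ℝ, t ∈ Ioi (0:ℝ) → (0:ℝ) ≤ min 1 t⁻¹ := fun t ht =>
    le_min zero_le_one (inv_nonneg.mpr (le_of_lt ht))
  have hIoc : (∫⁻ t in Ioc (0:ℝ) 1, ENNReal.ofReal ((min 1 t⁻¹)^3) * B) ≤ B := by
    have : (∫⁻ t in Ioc (0:ℝ) 1, ENNReal.ofReal ((min 1 t⁻¹)^3) * B)
        ≤ ∫⁻ _ in Ioc (0:ℝ) 1, B := by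
      refine setLIntegral_mono' measurableSet_Ioc fun t ht => ?_
      have hb : ENNReal.ofReal ((min 1 t⁻¹)^3) ≤ 1 := by
        rw [← ENNReal.ofReal_one]
        refine ENNReal.ofReal_le_ofReal ?_
        calc (min 1 t⁻¹)^3 ≤ 1^3 :=
            pow_le_pow_left₀ (h06 t ht.1) (min_le_left _ _) 3
          _ = 1 := one_pow 3
      calc ENNReal.ofReal ((min 1 t⁻¹)^3) * B ≤ 1 * B := mul_le_mul_left hb B
        _ = B := one_mul B
    refine this.trans ?_
    rw [setLIntegral_const, Real.volume_Ioc]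
    simp
  have hIoi : (∫⁻ t in Ioi (1:ℝ), ENNReal.ofReal ((min 1 t⁻¹)^3) * B)
      ≤ ENNReal.ofReal (1/2) * B := by
    have step1 : (∫⁻ t in Ioi (1:ℝ), ENNReal.ofReal ((min 1 t⁻¹)^3) * B)
        ≤ ∫⁻ t in Ioi (1:ℝ), ENNReal.ofReal (t^(-3:ℝ)) * B := by
      refine setLIntegral_mono' measurableSet_Ioi fun t ht => ?_
      have ht1 : (1:ℝ) < t := ht
      have hmin : min 1 t⁻¹ = t⁻¹ := min_eq_right (by
        rw [inv_le_one_iff₀]; right; linarith)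
      refine mul_le_mul_left (ENNReal.ofReal_le_ofReal ?_) B
      rw [hmin, Real.rpow_neg (by linarith), inv_pow, ← Real.rpow_natCast t 3]
      norm_num
    refine step1.trans ?_
    rw [lintegral_mul_const' _ _ (measure_ball_lt_top).ne]
    refine mul_le_mul_left (le_of_eq ?_) B
    rw [← ofReal_integral_eq_lintegral_ofReal
        (integrableOn_Ioi_rpow_of_lt (by norm_num) (by norm_num))
        ((ae_restrict_iff' measurableSet_Ioi).mpr (Filter.Eventually.of_forall
          fun t ht => Real.rpow_nonneg (le_of_lt (lt_trans one_pos ht)) _))]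
    congr 1
    rw [integral_Ioi_rpow_of_lt (by norm_num) (by norm_num)]
    norm_num
  calc ∫⁻ t in Ioi (0:ℝ), volume {a : E3 | t < J a}
      ≤ ∫⁻ t in Ioi (0:ℝ), ENNReal.ofReal ((min 1 t⁻¹)^3) * B :=
        setLIntegral_mono' measurableSet_Ioi key
    _ = (∫⁻ t in Ioc (0:ℝ) 1, ENNReal.ofReal ((min 1 t⁻¹)^3) * B)
        + ∫⁻ t in Ioi (1:ℝ), ENNReal.ofReal ((min 1 t⁻¹)^3) * B := by
        rw [← lintegral_union measurableSet_Ioi (Set.Ioc_disjoint_Ioi le_rfl),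
          Set.Ioc_union_Ioi_eq_Ioi (by norm_num : (0:ℝ) ≤ 1)]
    _ ≤ B + ENNReal.ofReal (1/2) * B := add_le_add hIoc hIoi
    _ ≤ ENNReal.ofReal 5 + ENNReal.ofReal (1/2) * ENNReal.ofReal 5 :=
        add_le_add vol_ball_le (mul_le_mul_right vol_ball_le _)
    _ = ENNReal.ofReal (5 + 1/2*5) := by
        rw [← ENNReal.ofReal_mul (by norm_num), ← ENNReal.ofReal_add (by norm_num) (by norm_num)]
    _ ≤ ENNReal.ofReal 8 := ENNReal.ofReal_le_ofReal (by norm_num)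

lemma integrable_J : Integrable J := by
  refine ⟨J_meas.aestronglyMeasurable, ?_⟩
  rw [hasFiniteIntegral_iff_ofReal (Filter.Eventually.of_forall J_nonneg)]
  exact lt_of_le_of_lt lint_J_le ENNReal.ofReal_lt_top

lemma int_J_le : ∫ u, J u ≤ 8 := by
  rw [integral_eq_lintegral_of_nonneg_ae (Filter.Eventually.of_forall J_nonneg)
    J_meas.aestronglyMeasurable]
  exact ENNReal.toReal_le_of_le_ofReal (by norm_num) lint_J_le

lemma integrable_J_sub (v : E3) : Integrable (fun w => J (v - w)) := by
  have := ((Measure.measurePreserving_sub_left volume v).integrable_comp_emb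
    (MeasurableEquiv.subLeft v).measurableEmbedding).mpr integrable_J
  exact this

lemma int_J_sub (v : E3) : ∫ w, J (v - w) = ∫ u, J u :=
  integral_sub_left_eq_self J volume v


lemma maxw_nonneg (w : E3) : 0 ≤ maxw 1 w := by
  unfold maxw
  positivity

lemma maxw_le (w : E3) : maxw 1 w ≤ rexp (-(1/2)*‖w‖^2) := by
  unfold maxw
  have h1 : (1 / (2 * π)) ^ ((3:ℝ)/2) ≤ 1 := by
    refine Real.rpow_le_one (by positivity) ?_ (by norm_num)
    rw [div_le_one (by positivity)]
    linarith [Real.pi_gt_three]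
  have h2 : rexp (-1 * ‖w‖ ^ 2 / 2) = rexp (-(1/2)*‖w‖^2) := by ring_nf
  calc (1 / (2 * π)) ^ ((3:ℝ)/2) * rexp (-1 * ‖w‖ ^ 2 / 2)
      ≤ 1 * rexp (-1 * ‖w‖ ^ 2 / 2) := by
        exact mul_le_mul_of_nonneg_right h1 (Real.exp_nonneg _)
    _ = rexp (-(1/2)*‖w‖^2) := by rw [one_mul, h2]

lemma coord_abs_le (z : E3) (i : Fin 3) : |z i| ≤ ‖z‖ := by
  have h : (z i)^2 ≤ ‖z‖^2 := by
    rw [norm_sq_eq]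
    exact Finset.single_le_sum (f := fun k => (z k)^2) (fun k _ => sq_nonneg _)
      (Finset.mem_univ i)
  calc |z i| = Real.sqrt ((z i)^2) := (Real.sqrt_sq_eq_abs _).symm
    _ ≤ Real.sqrt (‖z‖^2) := Real.sqrt_le_sqrt h
    _ = ‖z‖ := by rw [Real.sqrt_sq (norm_nonneg z)]

lemma phi_abs_le (z : E3) (i j : Fin 3) : |Phi z i j| ≤ 2/‖z‖ := by
  rcases eq_or_ne z 0 with h | h
  · simp [h, Phi]
  · have hz : (0:ℝ) < ‖z‖ := norm_pos_iff.mpr h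
    unfold Phi
    refine (abs_sub _ _).trans ?_
    have h1 : |(if i = j then (1:ℝ) else 0) / ‖z‖| ≤ 1/‖z‖ := by
      split
      · rw [abs_of_nonneg (by positivity)]
      · simp

    have h2 : |z i * z j / ‖z‖^3| ≤ 1/‖z‖ := by
      rw [abs_div, abs_of_nonneg (by positivity : (0:ℝ) ≤ ‖z‖^3), abs_mul,
        div_le_div_iff₀ (by positivity) hz]
      have ha := coord_abs_le z i
      have hb := coord_abs_le z j
      nlinarith [mul_le_mul ha hb (abs_nonneg (z j)) (norm_nonneg z), hz.le]
    have h3 : 1/‖z‖ + 1/‖z‖ = 2/‖z‖ := by ring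
    linarith
  
lemma meas_phi_mul (v : E3) (i j : Fin 3) :
    AEStronglyMeasurable (fun w : E3 => Phi (v - w) i j * maxw 1 w) volume := by
  have h1 : Continuous fun w : E3 => v - w := continuous_const.sub continuous_id
  have hnorm : Measurable fun w : E3 => ‖v - w‖ := h1.norm.measurable
  have hcoord : ∀ k : Fin 3, Measurable fun w : E3 => (v - w) k := fun k =>
    ((EuclideanSpace.proj (𝕜 := ℝ) k).continuous.comp h1).measurable
  have hmaxw : Continuous (maxw 1) := by
    unfold maxw
    exact continuous_const.mul (Real.continuous_exp.comp (by continuity))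
  have : Measurable fun w : E3 => Phi (v - w) i j := by
    unfold Phi
    exact ((measurable_const.div hnorm).sub
      (((hcoord i).mul (hcoord j)).div (hnorm.pow_const 3)))
  exact (this.mul hmaxw.measurable).aestronglyMeasurable

lemma integrable_phi_maxw (v : E3) (i j : Fin 3) :
    Integrable (fun w : E3 => Phi (v - w) i j * maxw 1 w) := by
  refine Integrable.mono' (g := fun w => 2 * (J (v - w) + rexp (-(1/2)*‖w‖^2)))
    (((integrable_J_sub v).add (integrable_gauss (by norm_num))).const_mul 2)
    (meas_phi_mul v i j) (Filter.Eventually.of_forall fun w => ?_)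
  rw [Real.norm_eq_abs, abs_mul, abs_of_nonneg (maxw_nonneg w)]
  have h1 : |Phi (v - w) i j| * maxw 1 w ≤ (2/‖v - w‖) * rexp (-(1/2)*‖w‖^2) := by
    exact mul_le_mul (phi_abs_le _ i j) (maxw_le w) (maxw_nonneg w)
      (by positivity)
  refine h1.trans ?_
  have hexp1 : rexp (-(1/2)*‖w‖^2) ≤ 1 := Real.exp_le_one_iff.mpr (by nlinarith [sq_nonneg ‖w‖])
  have hexp0 : 0 ≤ rexp (-(1/2)*‖w‖^2) := Real.exp_nonneg _
  show _ ≤ 2 * (J (v - w) + rexp (-(1/2)*‖w‖^2))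
  rcases lt_or_ge ‖v - w‖ 1 with hball | hball
  · have hJ : J (v - w) = ‖v - w‖⁻¹ := by
      rw [J, Set.indicator_of_mem (by simpa [Metric.mem_ball] using hball)]
    rcases eq_or_lt_of_le (norm_nonneg (v - w)) with h0 | h0
    · rw [← h0, div_zero, zero_mul]
      nlinarith [J_nonneg (v - w), hexp0]
    · have e1 : 2/‖v-w‖ * rexp (-(1/2)*‖w‖^2) ≤ 2/‖v-w‖ * 1 :=
        mul_le_mul_of_nonneg_left hexp1 (by positivity)
      have e2 : (2:ℝ)/‖v-w‖ = 2 * J (v-w) := by rw [hJ]; ring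
      nlinarith [hexp0, J_nonneg (v - w)]
  · have hJ : 0 ≤ J (v - w) := J_nonneg _
    have h2 : 2/‖v - w‖ ≤ 2 := by
      rw [div_le_iff₀ (by linarith)]
      linarith
    nlinarith [h2, hexp0, hexp1, hJ, mul_le_mul_of_nonneg_right h2 hexp0]

lemma exp_half_eq (r : ℝ) : rexp (-(1/2)*r^2) = rexp (-(1/4)*r^2) * rexp (-(1/4)*r^2) := by
  rw [← Real.exp_add]
  ring_nf

lemma sq_mul_exp_le (r : ℝ) : r^2 * rexp (-(1/4)*r^2) ≤ 4 := by
  have h := Real.add_one_le_exp ((1/4)*r^2)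
  have hpos : 0 < rexp ((1/4)*r^2) := Real.exp_pos _
  have hinv : rexp (-(1/4)*r^2) * rexp ((1/4)*r^2) = 1 := by
    rw [← Real.exp_add]; ring_nf; exact Real.exp_zero
  nlinarith [Real.exp_pos (-(1/4)*r^2)]

lemma cube_mul_exp_le (r : ℝ) (hr : 0 ≤ r) : (2 + 2*r) * r^2 * rexp (-(1/4)*r^2) ≤ 64 := by
  have h8 := Real.add_one_le_exp (r^2/8)
  have hsq : rexp ((1/4)*r^2) = rexp (r^2/8) * rexp (r^2/8) := by
    rw [← Real.exp_add]; ring_nf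
  have hinv : rexp (-(1/4)*r^2) * rexp ((1/4)*r^2) = 1 := by
    rw [← Real.exp_add]; ring_nf; exact Real.exp_zero
  have hlow : (1 + r^2/8)^2 ≤ rexp ((1/4)*r^2) := by
    rw [hsq]
    have h0 : (0:ℝ) ≤ 1 + r^2/8 := by positivity
    nlinarith [h8]
  have hcube : (2 + 2*r) * r^2 ≤ 64 * (1 + r^2/8)^2 := by nlinarith [sq_nonneg (r^2 - r), sq_nonneg r, sq_nonneg (r^2-8)]
  have hexp0 : 0 < rexp (-(1/4)*r^2) := Real.exp_pos _
  calc (2 + 2*r) * r^2 * rexp (-(1/4)*r^2) ≤ 64 * (1 + r^2/8)^2 * rexp (-(1/4)*r^2) := by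
        exact mul_le_mul_of_nonneg_right hcube hexp0.le
    _ ≤ 64 * rexp ((1/4)*r^2) * rexp (-(1/4)*r^2) := by
        refine mul_le_mul_of_nonneg_right ?_ hexp0.le
        nlinarith [hlow]
    _ = 64 := by
        have : rexp ((1/4)*r^2) * rexp (-(1/4)*r^2) = 1 := by
          rw [← Real.exp_add]; ring_nf; exact Real.exp_zero
        rw [mul_assoc, this, mul_one]

lemma pointwise_maj (v w : E3) :
    (1 + ‖v‖) * ((∑ i, ∑ j, Phi (v - w) i j * v i * v j) * maxw 1 w)
      ≤ 64 * J (v - w) + 80 * rexp (-(1/4)*‖w‖^2) := by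
  have hQ0 := quad_nonneg v w
  have hQle := quad_le v w
  have hμ0 := maxw_nonneg w
  have hμle := maxw_le w
  have hJ0 := J_nonneg (v - w)
  have hexp0 : (0:ℝ) < rexp (-(1/4)*‖w‖^2) := Real.exp_pos _
  have hv0 : (0:ℝ) < 1 + ‖v‖ := by positivity
  set Q := ∑ i, ∑ j, Phi (v - w) i j * v i * v j with hQ
  rcases eq_or_lt_of_le (norm_nonneg (v - w)) with h0 | hz
  · -- v = w : Q ≤ ‖w‖²/0 = 0 so Q = 0
    rw [← h0] at hQle
    rw [div_zero] at hQle
    have : Q = 0 := le_antisymm hQle hQ0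
    rw [this, zero_mul, mul_zero]
    positivity
  · -- main bound
    have hw0 : (0:ℝ) ≤ ‖w‖ := norm_nonneg w
    have key : (1 + ‖v‖) * (Q * maxw 1 w) ≤ 64 * rexp (-(1/4)*‖w‖^2) / ‖v - w‖ ∨
        (1 + ‖v‖) * (Q * maxw 1 w) ≤ 16 * rexp (-(1/4)*‖w‖^2) := by
      rcases le_or_gt (1 + ‖v‖) (4 * ‖v - w‖) with hA | hB
      · right
        have e1 : Q * maxw 1 w ≤ (‖w‖^2/‖v - w‖) * rexp (-(1/2)*‖w‖^2) :=
          mul_le_mul hQle hμle hμ0 (by positivity)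
        have e2 : (1 + ‖v‖) * (Q * maxw 1 w)
            ≤ (4 * ‖v - w‖) * ((‖w‖^2/‖v - w‖) * rexp (-(1/2)*‖w‖^2)) := by
          refine mul_le_mul hA e1 ?_ (by positivity)
          exact mul_nonneg hQ0 hμ0
        have e3 : (4 * ‖v - w‖) * ((‖w‖^2/‖v - w‖) * rexp (-(1/2)*‖w‖^2))
            = 4 * ‖w‖^2 * rexp (-(1/2)*‖w‖^2) := by
          field_simp
        have e4 : 4 * ‖w‖^2 * rexp (-(1/2)*‖w‖^2) ≤ 16 * rexp (-(1/4)*‖w‖^2) := by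
          rw [exp_half_eq]
          have := sq_mul_exp_le ‖w‖
          nlinarith [hexp0]
        linarith [e2, e4, e3.le, e3.ge]
      · left
        -- 1 + ‖v‖ ≤ 2 + 2‖w‖
        have htri : ‖v‖ ≤ ‖w‖ + ‖v - w‖ := by
          calc ‖v‖ = ‖w + (v - w)‖ := by rw [add_sub_cancel]
            _ ≤ ‖w‖ + ‖v - w‖ := norm_add_le _ _
        have hvw : 1 + ‖v‖ ≤ 2 + 2*‖w‖ := by linarith
        have e1 : Q * maxw 1 w ≤ (‖w‖^2/‖v - w‖) * rexp (-(1/2)*‖w‖^2) :=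
          mul_le_mul hQle hμle hμ0 (by positivity)
        have e2 : (1 + ‖v‖) * (Q * maxw 1 w)
            ≤ (2 + 2*‖w‖) * ((‖w‖^2/‖v - w‖) * rexp (-(1/2)*‖w‖^2)) := by
          refine mul_le_mul hvw e1 (mul_nonneg hQ0 hμ0) (by positivity)
        have e3 : (2 + 2*‖w‖) * ((‖w‖^2/‖v - w‖) * rexp (-(1/2)*‖w‖^2))
            ≤ 64 * rexp (-(1/4)*‖w‖^2) / ‖v - w‖ := by
          rw [exp_half_eq, div_mul_eq_mul_div, mul_div_assoc', div_le_div_iff₀ hz hz]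
          have := cube_mul_exp_le ‖w‖ hw0
          nlinarith [hz, hexp0, mul_le_mul_of_nonneg_right
            (cube_mul_exp_le ‖w‖ hw0) (mul_nonneg hexp0.le hz.le)]
        linarith
    rcases key with hk | hk
    · refine hk.trans ?_
      rcases lt_or_ge ‖v - w‖ 1 with hball | hball
      · have hJ : J (v - w) = ‖v - w‖⁻¹ := by
          rw [J, Set.indicator_of_mem (by simpa [Metric.mem_ball] using hball)]
        have : 64 * rexp (-(1/4)*‖w‖^2) / ‖v - w‖ ≤ 64 * (1:ℝ) / ‖v - w‖ := by
          gcongr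
          exact Real.exp_le_one_iff.mpr (by nlinarith [sq_nonneg ‖w‖])
        refine this.trans ?_
        rw [hJ]
        rw [mul_one, div_eq_mul_inv]
        nlinarith [hexp0]
      · have : 64 * rexp (-(1/4)*‖w‖^2) / ‖v - w‖ ≤ 64 * rexp (-(1/4)*‖w‖^2) := by
          rw [div_le_iff₀ hz]
          nlinarith [hexp0]
        refine this.trans ?_
        nlinarith [hJ0, hexp0]
    · refine hk.trans ?_
      nlinarith [hJ0, hexp0]

lemma sigma_quad_le (v : E3) :
    ∑ i, ∑ j, sigmaM i j v * v i * v j ≤ 5632 / (1 + ‖v‖) := by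
  have hv0 : (0:ℝ) < 1 + ‖v‖ := by positivity
  have hInt : ∀ i j : Fin 3, Integrable (fun w => Phi (v - w) i j * maxw 1 w * (v i * v j)) :=
    fun i j => (integrable_phi_maxw v i j).mul_const _
  have hrw : ∑ i, ∑ j, sigmaM i j v * v i * v j
      = ∫ w, (∑ i, ∑ j, Phi (v - w) i j * v i * v j) * maxw 1 w := by
    have h1 : ∑ i, ∑ j, sigmaM i j v * v i * v j
        = ∑ i, ∑ j, ∫ w, Phi (v - w) i j * maxw 1 w * (v i * v j) := by
      refine Finset.sum_congr rfl fun i _ => Finset.sum_congr rfl fun j _ => ?_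
      rw [sigmaM, convPhi, mul_assoc, ← integral_mul_const]
    rw [h1]
    have h2 : ∀ i : Fin 3, (∑ j, ∫ w, Phi (v - w) i j * maxw 1 w * (v i * v j))
        = ∫ w, ∑ j, Phi (v - w) i j * maxw 1 w * (v i * v j) := fun i =>
      (integral_finset_sum _ (fun j _ => hInt i j)).symm
    simp_rw [h2]
    rw [← integral_finset_sum _
      (fun i _ => integrable_finset_sum _ (fun j _ => hInt i j))]
    refine integral_congr_ae (Filter.Eventually.of_forall fun w => ?_)
    simp only [Finset.sum_mul]
    exact Finset.sum_congr rfl fun i _ => Finset.sum_congr rfl fun j _ => by ring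
  -- now the integral bound
  rw [hrw]
  have hmaj : Integrable (fun w : E3 => 64 * J (v - w) + 80 * rexp (-(1/4)*‖w‖^2)) :=
    ((integrable_J_sub v).const_mul 64).add ((integrable_gauss (by norm_num)).const_mul 80)
  have hbound : (1 + ‖v‖) * ∫ w, (∑ i, ∑ j, Phi (v - w) i j * v i * v j) * maxw 1 w
      ≤ 5632 := by
    rw [← integral_const_mul]
    have hle := integral_mono_of_nonneg (f := fun w : E3 =>
        (1 + ‖v‖) * ((∑ i, ∑ j, Phi (v - w) i j * v i * v j) * maxw 1 w))
      (g := fun w : E3 => 64 * J (v - w) + 80 * rexp (-(1/4)*‖w‖^2))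
      (Filter.Eventually.of_forall fun w =>
        mul_nonneg hv0.le (mul_nonneg (quad_nonneg v w) (maxw_nonneg w)))
      hmaj
      (Filter.Eventually.of_forall fun w => pointwise_maj v w)
    refine hle.trans ?_
    rw [integral_add ((integrable_J_sub v).const_mul 64)
      ((integrable_gauss (by norm_num)).const_mul 80), integral_const_mul, integral_const_mul]
    have hJle : ∫ w, J (v - w) ≤ 8 := by rw [int_J_sub]; exact int_J_le
    have hGle : ∫ w : E3, rexp (-(1/4)*‖w‖^2) ≤ 64 := integral_gauss_quarter_le
    have hJ0 : 0 ≤ ∫ w, J (v - w) :=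
      integral_nonneg fun w => J_nonneg _
    nlinarith [hJle, hGle, hJ0]
  rw [le_div_iff₀ hv0, mul_comm]
  exact hbound

end helpers

/-- Degeneracy of the rescaled dissipation:
`ε⁻¹ ξ·σ(ξ/ε)ξ ≤ C ε ⟨ξ/ε⟩⁻¹ ≤ C min{ε, ε²/|ξ|}`. -/
theorem stmt_7 :
    ∃ C > (0:ℝ), ∀ ε ∈ Set.Ioc (0:ℝ) 1, ∀ ξ : E3,
      ε⁻¹ * (∑ i, ∑ j, sigmaM i j (ε⁻¹ • ξ) * ξ i * ξ j) ≤ C * ε / jap (ε⁻¹ • ξ) ∧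
      (ξ ≠ 0 → ε⁻¹ * (∑ i, ∑ j, sigmaM i j (ε⁻¹ • ξ) * ξ i * ξ j) ≤
        C * min ε (ε ^ 2 / ‖ξ‖)) := by
  refine ⟨5632, by norm_num, fun ε hε ξ => ?_⟩
  obtain ⟨hε0, hε1⟩ := hε
  set v : E3 := ε⁻¹ • ξ with hv
  have hξi : ∀ i, ξ i = ε * v i := fun i => by
    rw [hv]
    simp only [PiLp.smul_apply, smul_eq_mul]
    field_simp
  have hsum : ∑ i, ∑ j, sigmaM i j v * ξ i * ξ j
      = ε^2 * ∑ i, ∑ j, sigmaM i j v * v i * v j := by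
    rw [Finset.mul_sum]
    refine Finset.sum_congr rfl fun i _ => ?_
    rw [Finset.mul_sum]
    refine Finset.sum_congr rfl fun j _ => ?_
    rw [hξi i, hξi j]
    ring
  have hmain := sigma_quad_le v
  have hjap1 : 1 ≤ jap v := by
    rw [jap]
    have : Real.sqrt 1 ≤ Real.sqrt (1 + ‖v‖^2) :=
      Real.sqrt_le_sqrt (by nlinarith [sq_nonneg ‖v‖])
    simpa using this
  have hjapv : jap v ≤ 1 + ‖v‖ := by
    rw [jap]
    have : Real.sqrt (1 + ‖v‖^2) ≤ Real.sqrt ((1 + ‖v‖)^2) :=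
      Real.sqrt_le_sqrt (by nlinarith [norm_nonneg v])
    rwa [Real.sqrt_sq (by positivity)] at this
  have hjap0 : (0:ℝ) < jap v := lt_of_lt_of_le one_pos hjap1
  have hLHS : ε⁻¹ * (∑ i, ∑ j, sigmaM i j v * ξ i * ξ j)
      = ε * ∑ i, ∑ j, sigmaM i j v * v i * v j := by
    rw [hsum]
    field_simp
  have hfirst : ε⁻¹ * (∑ i, ∑ j, sigmaM i j v * ξ i * ξ j) ≤ 5632 * ε / jap v := by
    rw [hLHS]
    calc ε * ∑ i, ∑ j, sigmaM i j v * v i * v j ≤ ε * (5632/(1+‖v‖)) :=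
          mul_le_mul_of_nonneg_left hmain hε0.le
      _ = 5632 * ε / (1+‖v‖) := by ring
      _ ≤ 5632 * ε / jap v :=
          div_le_div_of_nonneg_left (by positivity) hjap0 hjapv
  refine ⟨hfirst, fun hξ => hfirst.trans ?_⟩
  have hnv : ‖v‖ = ε⁻¹ * ‖ξ‖ := by
    rw [hv, norm_smul]
    rw [Real.norm_eq_abs, abs_of_pos (inv_pos.mpr hε0)]
  have hξ0 : (0:ℝ) < ‖ξ‖ := norm_pos_iff.mpr hξ
  have hv0 : (0:ℝ) < ‖v‖ := by
    rw [hnv]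
    positivity
  have hjapn : ‖v‖ ≤ jap v := by
    rw [jap]
    have : Real.sqrt (‖v‖^2) ≤ Real.sqrt (1 + ‖v‖^2) :=
      Real.sqrt_le_sqrt (by nlinarith)
    rwa [Real.sqrt_sq (norm_nonneg v)] at this
  have hb : 5632 * ε / jap v ≤ 5632 * (ε^2/‖ξ‖) := by
    have h1 : 5632 * ε / jap v ≤ 5632 * ε / ‖v‖ :=
      div_le_div_of_nonneg_left (by positivity) hv0 hjapn
    refine h1.trans (le_of_eq ?_)
    rw [hnv]
    field_simp
  have ha : 5632 * ε / jap v ≤ 5632 * ε :=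
    div_le_self (by positivity) hjap1
  calc 5632 * ε / jap v ≤ min (5632*ε) (5632*(ε^2/‖ξ‖)) := le_min ha hb
    _ = 5632 * min ε (ε^2/‖ξ‖) := (mul_min_of_nonneg _ _ (by norm_num)).symm


end
end

section
/- Let h : ℝ³ \ {0} → ℝ be a function such that for all linearly independent ξ, ξ' ∈ ℝ³ the vector h(ξ)ξ − h(ξ')ξ' lies in span{ξ − ξ'}. Then h is constant on ℝ³ \ {0}. -/
open MeasureTheory Real

noncomputable section

/-- If `h(ξ)ξ − h(ξ')ξ' ∈ span{ξ − ξ'}` for all linearly independent `ξ, ξ'`, then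
`h` is constant away from the origin. -/
theorem stmt_10 (h : E3 → ℝ)
    (H : ∀ ξ ξ' : E3, LinearIndependent ℝ ![ξ, ξ'] →
      ∃ c : ℝ, h ξ • ξ - h ξ' • ξ' = c • (ξ - ξ')) :
    ∀ ξ ξ' : E3, ξ ≠ 0 → ξ' ≠ 0 → h ξ = h ξ' := by
  classical
  -- Step 1: for linearly independent pairs, the hypothesis forces equal values.
  have key : ∀ ξ ξ' : E3, LinearIndependent ℝ ![ξ, ξ'] → h ξ = h ξ' := by
    intro ξ ξ' li
    obtain ⟨c, hc⟩ := H ξ ξ' li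
    have h0 : (h ξ - c) • ξ + (c - h ξ') • ξ' = 0 := by
      have := hc
      rw [smul_sub] at this
      calc (h ξ - c) • ξ + (c - h ξ') • ξ'
          = (h ξ • ξ - h ξ' • ξ') - (c • ξ - c • ξ') := by
            rw [sub_smul, sub_smul]; abel
        _ = 0 := by rw [this]; abel
    obtain ⟨h1, h2⟩ := LinearIndependent.pair_iff.mp li _ _ h0
    have e1 : h ξ = c := by linarith [sub_eq_zero.mp h1]
    have e2 : h ξ' = c := by linarith
    rw [e1, e2]
  -- Step 2: given any two nonzero vectors, find a third independent of both.
  intro ξ ξ' hξ hξ'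
  have hne : Submodule.span ℝ ({ξ, ξ'} : Set E3) ≠ ⊤ := by
    intro htop
    have h1 : Module.finrank ℝ (Submodule.span ℝ (↑({ξ, ξ'} : Finset E3) : Set E3)) ≤ 2 := by
      refine (finrank_span_finset_le_card _).trans ?_
      simpa using Finset.card_insert_le ξ {ξ'}
    rw [show (↑({ξ, ξ'} : Finset E3) : Set E3) = ({ξ, ξ'} : Set E3) by simp, htop] at h1
    rw [finrank_top] at h1
    simp [finrank_euclideanSpace] at h1
  obtain ⟨η, hη⟩ : ∃ η : E3, η ∉ Submodule.span ℝ ({ξ, ξ'} : Set E3) := by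
    by_contra hcon
    push_neg at hcon
    exact hne (Submodule.eq_top_iff'.mpr hcon)
  have hηξ : η ∉ Submodule.span ℝ ({ξ} : Set E3) := fun hmem =>
    hη (Submodule.span_mono (by simp) hmem)
  have hηξ' : η ∉ Submodule.span ℝ ({ξ'} : Set E3) := fun hmem =>
    hη (Submodule.span_mono (by simp) hmem)
  have hη0 : η ≠ 0 := fun h0 => hηξ (h0 ▸ Submodule.zero_mem _)
  have li : ∀ v : E3, v ≠ 0 → η ∉ Submodule.span ℝ ({v} : Set E3) →
      LinearIndependent ℝ ![v, η] := by
    intro v hv hnv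
    rw [linearIndependent_fin2]
    refine ⟨by simpa using hη0, fun a ha => ?_⟩
    have ha0 : a ≠ 0 := by
      rintro rfl
      simp at ha
      exact hv ha.symm
    apply hnv
    have : η = a⁻¹ • v := by
      simp only [Matrix.cons_val_one, Matrix.head_cons, Matrix.cons_val_zero] at ha
      rw [← ha, smul_smul, inv_mul_cancel₀ ha0, one_smul]
    rw [this]
    exact Submodule.smul_mem _ _ (Submodule.mem_span_singleton_self v)
  have e1 : h ξ = h η := key ξ η (li ξ hξ hηξ)
  have e2 : h ξ' = h η := key ξ' η (li ξ' hξ' hηξ')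
  rw [e1, e2]

end
end
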